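/- There exists a nonzero rational number C₁ such that, in U(𝔤): (E₁₀F₃₁)_L(a) = C₁·H₁₀; moreover (E₁₀²F₃₁²)_L(b) ≡ 0 (mod U(𝔤)𝔫₊) and (E₁₀³F₃₁³)_L(c) ≡ 0 (mod U(𝔤)𝔫₊). -/

import Mathlib

/-- The canonical embedding of a Lie algebra into its universal enveloping algebra. -/
noncomputable def ιU {L : Type*} [LieRing L] [LieAlgebra ℂ L] (x : L) :
    UniversalEnvelopingAlgebra ℂ L :=
  UniversalEnvelopingAlgebra.ι ℂ x

/-- The adjoint action `X_L : f ↦ Xf − fX` of `X ∈ L` on `U(L)`. -/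
noncomputable def adU {L : Type*} [LieRing L] [LieAlgebra ℂ L] (x : L)
    (f : UniversalEnvelopingAlgebra ℂ L) : UniversalEnvelopingAlgebra ℂ L :=
  ιU x * f - f * ιU x

/-- A Lie algebra over `ℂ` equipped with Chevalley generators of type `G₂`:
`E₁₀, F₁₀, H₁₀` correspond to the short simple root `α` and `E₀₁, F₀₁, H₀₁` to the long
simple root `β`, subject to the Chevalley relations and the Serre relations, and the
generators generate the Lie algebra.  (By Serre's theorem such a Lie algebra is a quotient of
the simple Lie algebra of type `G₂`.) -/
structure G2Gens (L : Type*) [LieRing L] [LieAlgebra ℂ L] where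
  E10 : L
  E01 : L
  F10 : L
  F01 : L
  H10 : L
  H01 : L
  hH10H01 : ⁅H10, H01⁆ = 0
  hE10F10 : ⁅E10, F10⁆ = H10
  hE01F01 : ⁅E01, F01⁆ = H01
  hE10F01 : ⁅E10, F01⁆ = 0
  hE01F10 : ⁅E01, F10⁆ = 0
  hH10E10 : ⁅H10, E10⁆ = (2 : ℂ) • E10
  hH01E01 : ⁅H01, E01⁆ = (2 : ℂ) • E01
  hH10E01 : ⁅H10, E01⁆ = (-3 : ℂ) • E01
  hH01E10 : ⁅H01, E10⁆ = (-1 : ℂ) • E10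
  hH10F10 : ⁅H10, F10⁆ = (-2 : ℂ) • F10
  hH01F01 : ⁅H01, F01⁆ = (-2 : ℂ) • F01
  hH10F01 : ⁅H10, F01⁆ = (3 : ℂ) • F01
  hH01F10 : ⁅H01, F10⁆ = (1 : ℂ) • F10
  serreE1 : ⁅E10, ⁅E10, ⁅E10, ⁅E10, E01⁆⁆⁆⁆ = 0
  serreE2 : ⁅E01, ⁅E01, E10⁆⁆ = 0
  serreF1 : ⁅F10, ⁅F10, ⁅F10, ⁅F10, F01⁆⁆⁆⁆ = 0
  serreF2 : ⁅F01, ⁅F01, F10⁆⁆ = 0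
  generates : LieSubalgebra.lieSpan ℂ L {E10, E01, F10, F01, H10, H01} = ⊤

namespace G2Gens

variable {L : Type*} [LieRing L] [LieAlgebra ℂ L] (g : G2Gens L)

/-- The root vector `E₁₁ = [E₁₀, E₀₁]`. -/
def E11 : L := ⁅g.E10, g.E01⁆
/-- The root vector `E₂₁ = (1/2)[E₁₁, E₁₀]`. -/
noncomputable def E21 : L := (2 : ℂ)⁻¹ • ⁅g.E11, g.E10⁆
/-- The root vector `E₃₁ = (1/3)[E₂₁, E₁₀]`. -/
noncomputable def E31 : L := (3 : ℂ)⁻¹ • ⁅g.E21, g.E10⁆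
/-- The root vector `E₃₂ = [E₃₁, E₀₁]`. -/
noncomputable def E32 : L := ⁅g.E31, g.E01⁆
/-- The root vector `F₁₁ = [F₀₁, F₁₀]`. -/
def F11 : L := ⁅g.F01, g.F10⁆
/-- The root vector `F₂₁ = (1/2)[F₁₀, F₁₁]`. -/
noncomputable def F21 : L := (2 : ℂ)⁻¹ • ⁅g.F10, g.F11⁆
/-- The root vector `F₃₁ = (1/3)[F₁₀, F₂₁]`. -/
noncomputable def F31 : L := (3 : ℂ)⁻¹ • ⁅g.F10, g.F21⁆
/-- The root vector `F₃₂ = [F₀₁, F₃₁]`. -/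
noncomputable def F32 : L := ⁅g.F01, g.F31⁆
/-- The coroot `H₁₁ = H₁₀ + 3H₀₁`. -/
def H11 : L := g.H10 + (3 : ℂ) • g.H01
/-- The coroot `H₂₁ = 2H₁₀ + 3H₀₁`. -/
def H21 : L := (2 : ℂ) • g.H10 + (3 : ℂ) • g.H01
/-- The coroot `H₃₁ = H₁₀ + H₀₁`. -/
def H31 : L := g.H10 + g.H01
/-- The coroot `H₃₂ = H₁₀ + 2H₀₁`. -/
def H32 : L := g.H10 + (2 : ℂ) • g.H01

/-- The element `a = E₂₁` of `U(𝔤)`. -/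
noncomputable def aU : UniversalEnvelopingAlgebra ℂ L := ιU g.E21
/-- The element `b = E₃₁E₁₁ − E₃₂E₁₀` of `U(𝔤)`. -/
noncomputable def bU : UniversalEnvelopingAlgebra ℂ L :=
  ιU g.E31 * ιU g.E11 - ιU g.E32 * ιU g.E10
/-- The element `c = E₃₁²E₀₁ − E₃₂E₃₁H₀₁ − E₃₂²F₀₁` of `U(𝔤)`. -/
noncomputable def cU : UniversalEnvelopingAlgebra ℂ L :=
  ιU g.E31 * ιU g.E31 * ιU g.E01 - ιU g.E32 * ιU g.E31 * ιU g.H01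
    - ιU g.E32 * ιU g.E32 * ιU g.F01
/-- The element `u = (1/3)a² − b` of `U(𝔤)`. -/
noncomputable def uU : UniversalEnvelopingAlgebra ℂ L :=
  (3 : ℂ)⁻¹ • (g.aU * g.aU) - g.bU
/-- The element `v = (2/9)a³ − ab − 3c` of `U(𝔤)`. -/
noncomputable def vU : UniversalEnvelopingAlgebra ℂ L :=
  ((2 : ℂ) / 9) • (g.aU * g.aU * g.aU) - g.aU * g.bU - (3 : ℂ) • g.cU

/-- `f ≡ h (mod U(𝔤)𝔫₊)`:  `f − h` lies in the left ideal of `U(𝔤)` generated by `E₁₀`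
and `E₀₁`. -/
def EqModN (f h : UniversalEnvelopingAlgebra ℂ L) : Prop :=
  ∃ A B : UniversalEnvelopingAlgebra ℂ L, f - h = A * ιU g.E10 + B * ιU g.E01

end G2Gens

section UAux
variable {L : Type*} [LieRing L] [LieAlgebra ℂ L]

lemma ιU_smul (r : ℂ) (x : L) : ιU (r • x) = r • ιU x := by simp [ιU]
lemma ιU_add (x y : L) : ιU (x + y) = ιU x + ιU y := by simp [ιU]
lemma ιU_neg (x : L) : ιU (-x) = - ιU x := by simp [ιU]
lemma ιU_sub (x y : L) : ιU (x - y) = ιU x - ιU y := by simp [ιU]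
lemma ιU_zero : ιU (0 : L) = 0 := by simp [ιU]
lemma ι_lie (x y : L) : ιU ⁅x, y⁆ = ιU x * ιU y - ιU y * ιU x := by
  letI : LieRing (UniversalEnvelopingAlgebra ℂ L) := LieRing.ofAssociativeRing
  have h := (UniversalEnvelopingAlgebra.ι ℂ (L := L)).map_lie (x := x) (y := y)
  simp only [ιU] at h ⊢; rw [h, Ring.lie_def]
lemma adU_ι (x y : L) : adU x (ιU y) = ιU ⁅x, y⁆ := by rw [adU, ι_lie]
lemma adU_mul (x : L) (f h : UniversalEnvelopingAlgebra ℂ L) :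
    adU x (f * h) = adU x f * h + f * adU x h := by simp only [adU]; noncomm_ring
lemma adU_add (x : L) (f h : UniversalEnvelopingAlgebra ℂ L) :
    adU x (f + h) = adU x f + adU x h := by simp only [adU]; noncomm_ring
lemma adU_sub (x : L) (f h : UniversalEnvelopingAlgebra ℂ L) :
    adU x (f - h) = adU x f - adU x h := by simp only [adU]; noncomm_ring
lemma adU_smul (x : L) (r : ℂ) (f : UniversalEnvelopingAlgebra ℂ L) :
    adU x (r • f) = r • adU x f := by
  simp only [adU, mul_smul_comm, smul_mul_assoc, smul_sub]
lemma adU_zero (x : L) : adU x (0 : UniversalEnvelopingAlgebra ℂ L) = 0 := by simp [adU]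
lemma adU_neg (x : L) (f : UniversalEnvelopingAlgebra ℂ L) : adU x (-f) = - adU x f := by
  simp only [adU]; noncomm_ring
lemma ι_mul_comm (x y : L) : ιU x * ιU y = ιU y * ιU x + ιU ⁅x, y⁆ := by
  rw [ι_lie]; noncomm_ring

end UAux
namespace G2Gens
variable {L : Type*} [LieRing L] [LieAlgebra ℂ L] (g : G2Gens L)

/- definitional brackets -/
lemma lE10E01 : ⁅g.E10, g.E01⁆ = g.E11 := rfl
lemma lE11E10 : ⁅g.E11, g.E10⁆ = (2 : ℂ) • g.E21 := by
  rw [E21, smul_smul]; norm_num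
lemma lE21E10 : ⁅g.E21, g.E10⁆ = (3 : ℂ) • g.E31 := by
  rw [E31, smul_smul]; norm_num
lemma lE31E01 : ⁅g.E31, g.E01⁆ = g.E32 := rfl
lemma lF01F10 : ⁅g.F01, g.F10⁆ = g.F11 := rfl
lemma lF10F11 : ⁅g.F10, g.F11⁆ = (2 : ℂ) • g.F21 := by
  rw [F21, smul_smul]; norm_num
lemma lF10F21 : ⁅g.F10, g.F21⁆ = (3 : ℂ) • g.F31 := by
  rw [F31, smul_smul]; norm_num
lemma lF01F31 : ⁅g.F01, g.F31⁆ = g.F32 := rfl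

/- weights -/
lemma lH10E11 : ⁅g.H10, g.E11⁆ = (-1 : ℂ) • g.E11 := by
  simp only [E11, leibniz_lie, g.hH10E10, g.hH10E01, smul_lie, lie_smul]; module
lemma lH01E11 : ⁅g.H01, g.E11⁆ = (1 : ℂ) • g.E11 := by
  simp only [E11, leibniz_lie, g.hH01E10, g.hH01E01, smul_lie, lie_smul]; module
lemma lH10E21 : ⁅g.H10, g.E21⁆ = (1 : ℂ) • g.E21 := by
  simp only [E21, leibniz_lie, g.lH10E11, g.hH10E10, smul_lie, lie_smul]; module
lemma lH01E21 : ⁅g.H01, g.E21⁆ = 0 := by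
  simp only [E21, leibniz_lie, g.lH01E11, g.hH01E10, smul_lie, lie_smul]; module
lemma lH10E31 : ⁅g.H10, g.E31⁆ = (3 : ℂ) • g.E31 := by
  simp only [E31, leibniz_lie, g.lH10E21, g.hH10E10, smul_lie, lie_smul]; module
lemma lH01E31 : ⁅g.H01, g.E31⁆ = (-1 : ℂ) • g.E31 := by
  simp only [E31, leibniz_lie, g.lH01E21, g.hH01E10, smul_lie, lie_smul, zero_lie, lie_zero]; module
lemma lH10E32 : ⁅g.H10, g.E32⁆ = 0 := by
  simp only [E32, leibniz_lie, g.lH10E31, g.hH10E01, smul_lie, lie_smul]; module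
lemma lH01E32 : ⁅g.H01, g.E32⁆ = (1 : ℂ) • g.E32 := by
  simp only [E32, leibniz_lie, g.lH01E31, g.hH01E01, smul_lie, lie_smul]; module
lemma lH10F11 : ⁅g.H10, g.F11⁆ = (1 : ℂ) • g.F11 := by
  simp only [F11, leibniz_lie, g.hH10F01, g.hH10F10, smul_lie, lie_smul]; module
lemma lH01F11 : ⁅g.H01, g.F11⁆ = (-1 : ℂ) • g.F11 := by
  simp only [F11, leibniz_lie, g.hH01F01, g.hH01F10, smul_lie, lie_smul]; module
lemma lH10F21 : ⁅g.H10, g.F21⁆ = (-1 : ℂ) • g.F21 := by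
  simp only [F21, leibniz_lie, g.lH10F11, g.hH10F10, smul_lie, lie_smul]; module
lemma lH01F21 : ⁅g.H01, g.F21⁆ = 0 := by
  simp only [F21, leibniz_lie, g.lH01F11, g.hH01F10, smul_lie, lie_smul]; module
lemma lH10F31 : ⁅g.H10, g.F31⁆ = (-3 : ℂ) • g.F31 := by
  simp only [F31, leibniz_lie, g.lH10F21, g.hH10F10, smul_lie, lie_smul]; module
lemma lH01F31 : ⁅g.H01, g.F31⁆ = (1 : ℂ) • g.F31 := by
  simp only [F31, leibniz_lie, g.lH01F21, g.hH01F10, smul_lie, lie_smul, zero_lie, lie_zero]; module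
lemma lH10F32 : ⁅g.H10, g.F32⁆ = 0 := by
  simp only [F32, leibniz_lie, g.lH10F31, g.hH10F01, smul_lie, lie_smul]; module
lemma lH01F32 : ⁅g.H01, g.F32⁆ = (-1 : ℂ) • g.F32 := by
  simp only [F32, leibniz_lie, g.lH01F31, g.hH01F01, smul_lie, lie_smul]; module

/- flipped weights -/
lemma lE10H10 : ⁅g.E10, g.H10⁆ = (-2 : ℂ) • g.E10 := by
  rw [← lie_skew, g.hH10E10]; module
lemma lE10H01 : ⁅g.E10, g.H01⁆ = (1 : ℂ) • g.E10 := by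
  rw [← lie_skew, g.hH01E10]; module
lemma lE01H10 : ⁅g.E01, g.H10⁆ = (3 : ℂ) • g.E01 := by
  rw [← lie_skew, g.hH10E01]; module
lemma lE01H01 : ⁅g.E01, g.H01⁆ = (-2 : ℂ) • g.E01 := by
  rw [← lie_skew, g.hH01E01]; module
lemma lE11H10 : ⁅g.E11, g.H10⁆ = (1 : ℂ) • g.E11 := by
  rw [← lie_skew, g.lH10E11]; module
lemma lE11H01 : ⁅g.E11, g.H01⁆ = (-1 : ℂ) • g.E11 := by
  rw [← lie_skew, g.lH01E11]; module
lemma lE21H10 : ⁅g.E21, g.H10⁆ = (-1 : ℂ) • g.E21 := by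
  rw [← lie_skew, g.lH10E21]; module
lemma lE21H01 : ⁅g.E21, g.H01⁆ = 0 := by
  rw [← lie_skew, g.lH01E21]; simp
lemma lE31H10 : ⁅g.E31, g.H10⁆ = (-3 : ℂ) • g.E31 := by
  rw [← lie_skew, g.lH10E31]; module
lemma lE31H01 : ⁅g.E31, g.H01⁆ = (1 : ℂ) • g.E31 := by
  rw [← lie_skew, g.lH01E31]; module
lemma lF31H10 : ⁅g.F31, g.H10⁆ = (3 : ℂ) • g.F31 := by
  rw [← lie_skew, g.lH10F31]; module
lemma lF31H01 : ⁅g.F31, g.H01⁆ = (-1 : ℂ) • g.F31 := by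
  rw [← lie_skew, g.lH01F31]; module

/- flipped definitional / easy E-E -/
lemma lE01E10 : ⁅g.E01, g.E10⁆ = (-1 : ℂ) • g.E11 := by
  rw [← lie_skew, g.lE10E01]; module
lemma lE10E11 : ⁅g.E10, g.E11⁆ = (-2 : ℂ) • g.E21 := by
  rw [← lie_skew, g.lE11E10]; module
lemma lE10E21 : ⁅g.E10, g.E21⁆ = (-3 : ℂ) • g.E31 := by
  rw [← lie_skew, g.lE21E10]; module
lemma lE01E31 : ⁅g.E01, g.E31⁆ = (-1 : ℂ) • g.E32 := by
  rw [← lie_skew, g.lE31E01]; module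
lemma lF10F01 : ⁅g.F10, g.F01⁆ = (-1 : ℂ) • g.F11 := by
  rw [← lie_skew, g.lF01F10]; module
lemma lF11F10 : ⁅g.F11, g.F10⁆ = (-2 : ℂ) • g.F21 := by
  rw [← lie_skew, g.lF10F11]; module
lemma lF31F01 : ⁅g.F31, g.F01⁆ = (-1 : ℂ) • g.F32 := by
  rw [← lie_skew, g.lF01F31]; module

/- Serre-derived zeros -/
lemma lE01E11 : ⁅g.E01, g.E11⁆ = 0 := by
  have h := g.serreE2
  rw [show ⁅g.E01, g.E10⁆ = (-1 : ℂ) • g.E11 from g.lE01E10, lie_smul] at h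
  have h2 := congrArg (fun z => (-1 : ℂ) • z) h
  simpa [smul_smul] using h2
lemma lE01E21 : ⁅g.E01, g.E21⁆ = 0 := by
  simp only [E21, lie_smul, leibniz_lie, g.lE01E11, g.lE01E10, zero_lie, lie_smul,
    lie_self, smul_zero, add_zero, zero_add]
lemma lE10E31 : ⁅g.E10, g.E31⁆ = 0 := by
  have h := g.serreE1
  simp only [show ⁅g.E10, g.E01⁆ = g.E11 from rfl, g.lE10E11, g.lE10E21, lie_smul,
    smul_smul] at h
  have h2 := congrArg (fun z => (6 : ℂ)⁻¹ • z) h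
  simp only [smul_smul, smul_zero] at h2
  norm_num at h2
  exact h2
lemma lE11E21 : ⁅g.E11, g.E21⁆ = (-3 : ℂ) • g.E32 := by
  rw [show g.E11 = ⁅g.E10, g.E01⁆ from rfl, lie_lie, g.lE01E21, g.lE10E21, lie_zero,
    lie_smul, g.lE01E31]
  module
lemma lE01E32 : ⁅g.E01, g.E32⁆ = 0 := by
  have h32 : g.E32 = (-3 : ℂ)⁻¹ • ⁅g.E11, g.E21⁆ := by
    rw [g.lE11E21, smul_smul]; norm_num
  rw [h32, lie_smul, leibniz_lie, g.lE01E11, g.lE01E21, zero_lie, lie_zero]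
  simp
lemma lE11E31 : ⁅g.E11, g.E31⁆ = 0 := by
  have hA : ⁅g.E11, g.E31⁆ = (-1 : ℂ) • ⁅g.E32, g.E10⁆ := by
    rw [show g.E31 = (3 : ℂ)⁻¹ • ⁅g.E21, g.E10⁆ from rfl, lie_smul, leibniz_lie,
      g.lE11E21, g.lE11E10, smul_lie, lie_smul, lie_self]
    module
  have hB : ⁅g.E10, g.E32⁆ = (-1 : ℂ) • ⁅g.E32, g.E10⁆ := by
    rw [← lie_skew]; module
  have h2 : ⁅g.E10, g.E32⁆ = (-1 : ℂ) • ⁅g.E11, g.E31⁆ := by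
    rw [show g.E32 = ⁅g.E31, g.E01⁆ from rfl, leibniz_lie, g.lE10E31, zero_lie,
      show ⁅g.E10, g.E01⁆ = g.E11 from rfl, zero_add, ← lie_skew]
    module
  have key : (2 : ℂ) • ⁅g.E11, g.E31⁆ = 0 := by
    have hxy : (-1 : ℂ) • ⁅g.E32, g.E10⁆ = (-1 : ℂ) • ⁅g.E11, g.E31⁆ := hB.symm.trans h2
    calc (2 : ℂ) • ⁅g.E11, g.E31⁆ = ⁅g.E11, g.E31⁆ + ⁅g.E11, g.E31⁆ := two_smul ℂ _
    _ = ((-1 : ℂ) • ⁅g.E32, g.E10⁆) + ⁅g.E11, g.E31⁆ := by rw [← hA]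
    _ = ((-1 : ℂ) • ⁅g.E11, g.E31⁆) + ⁅g.E11, g.E31⁆ := by rw [hxy]
    _ = 0 := by module
  have h2' := congrArg (fun z => (2 : ℂ)⁻¹ • z) key
  simpa [smul_smul] using h2'
lemma lE10E32 : ⁅g.E10, g.E32⁆ = 0 := by
  rw [show g.E32 = ⁅g.E31, g.E01⁆ from rfl, leibniz_lie, g.lE10E31, zero_lie,
    show ⁅g.E10, g.E01⁆ = g.E11 from rfl, zero_add, ← lie_skew, g.lE11E31, neg_zero]
lemma lE21E11 : ⁅g.E21, g.E11⁆ = (3 : ℂ) • g.E32 := by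
  rw [← lie_skew, g.lE11E21]; module

/- Serre-derived zeros, F side -/
lemma lF01F11 : ⁅g.F01, g.F11⁆ = 0 := g.serreF2
lemma lF01F21 : ⁅g.F01, g.F21⁆ = 0 := by
  simp only [F21, lie_smul, leibniz_lie, show ⁅g.F01, g.F10⁆ = g.F11 from rfl,
    g.lF01F11, lie_self, lie_zero, smul_zero, add_zero, zero_add]
lemma lF10F31 : ⁅g.F10, g.F31⁆ = 0 := by
  have h := g.serreF1
  simp only [g.lF10F01, g.lF10F11, g.lF10F21, lie_smul, smul_smul] at h
  have h2 := congrArg (fun z => (-6 : ℂ)⁻¹ • z) h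
  simp only [smul_smul, smul_zero] at h2
  norm_num at h2
  exact h2
lemma lF11F21 : ⁅g.F11, g.F21⁆ = (3 : ℂ) • g.F32 := by
  rw [show g.F11 = ⁅g.F01, g.F10⁆ from rfl, lie_lie, g.lF10F21, g.lF01F21, lie_zero,
    lie_smul, show ⁅g.F01, g.F31⁆ = g.F32 from rfl]
  module
lemma lF11F31 : ⁅g.F11, g.F31⁆ = 0 := by
  have hA : ⁅g.F11, g.F31⁆ = (1 : ℂ) • ⁅g.F10, g.F32⁆ := by
    rw [show g.F31 = (3 : ℂ)⁻¹ • ⁅g.F10, g.F21⁆ from rfl, lie_smul, leibniz_lie,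
      g.lF11F10, g.lF11F21, smul_lie, lie_smul, lie_self]
    module
  have hB : ⁅g.F10, g.F32⁆ = (-1 : ℂ) • ⁅g.F11, g.F31⁆ := by
    rw [show g.F32 = ⁅g.F01, g.F31⁆ from rfl, leibniz_lie, g.lF10F01, g.lF10F31,
      lie_zero, add_zero, smul_lie]
  have key : (2 : ℂ) • ⁅g.F11, g.F31⁆ = 0 := by
    calc (2 : ℂ) • ⁅g.F11, g.F31⁆ = ⁅g.F11, g.F31⁆ + ⁅g.F11, g.F31⁆ := two_smul ℂ _
    _ = ((1 : ℂ) • ⁅g.F10, g.F32⁆) + ⁅g.F11, g.F31⁆ := by rw [← hA]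
    _ = ((1 : ℂ) • ((-1 : ℂ) • ⁅g.F11, g.F31⁆)) + ⁅g.F11, g.F31⁆ := by rw [hB]
    _ = 0 := by module
  have h2 := congrArg (fun z => (2 : ℂ)⁻¹ • z) key
  simpa [smul_smul] using h2
lemma lF10F32 : ⁅g.F10, g.F32⁆ = 0 := by
  rw [show g.F32 = ⁅g.F01, g.F31⁆ from rfl, leibniz_lie, g.lF10F01, g.lF10F31,
    lie_zero, add_zero, smul_lie, g.lF11F31, smul_zero]
lemma lF31F11 : ⁅g.F31, g.F11⁆ = 0 := by rw [← lie_skew, g.lF11F31, neg_zero]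
lemma lF21F31 : ⁅g.F21, g.F31⁆ = 0 := by
  rw [show g.F21 = (2 : ℂ)⁻¹ • ⁅g.F10, g.F11⁆ from rfl, smul_lie, lie_lie,
    g.lF11F31, g.lF10F31, lie_zero, lie_zero]
  simp
lemma lF31F21 : ⁅g.F31, g.F21⁆ = 0 := by rw [← lie_skew, g.lF21F31, neg_zero]
lemma lF31F32 : ⁅g.F31, g.F32⁆ = 0 := by
  have hF32 : g.F32 = (3 : ℂ)⁻¹ • ⁅g.F11, g.F21⁆ := by
    rw [g.lF11F21, smul_smul]; norm_num
  rw [hF32, lie_smul, leibniz_lie, g.lF31F11, g.lF31F21, zero_lie, lie_zero]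
  simp

/- mixed E–F brackets -/
lemma lF01E01 : ⁅g.F01, g.E01⁆ = (-1 : ℂ) • g.H01 := by
  rw [← lie_skew, g.hE01F01]; module
lemma lE10F11 : ⁅g.E10, g.F11⁆ = (-3 : ℂ) • g.F01 := by
  rw [show g.F11 = ⁅g.F01, g.F10⁆ from rfl, leibniz_lie, g.hE10F01, g.hE10F10,
    zero_lie, zero_add, ← lie_skew, g.hH10F01]
  module
lemma lE01F11 : ⁅g.E01, g.F11⁆ = (1 : ℂ) • g.F10 := by
  rw [show g.F11 = ⁅g.F01, g.F10⁆ from rfl, leibniz_lie, g.hE01F01, g.hE01F10,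
    lie_zero, add_zero, g.hH01F10]
lemma lE01F21 : ⁅g.E01, g.F21⁆ = 0 := by
  simp only [F21, lie_smul, leibniz_lie, g.hE01F10, g.lE01F11, zero_lie, lie_smul,
    lie_self, smul_zero, zero_add, add_zero]
lemma lE10F21 : ⁅g.E10, g.F21⁆ = (2 : ℂ) • g.F11 := by
  simp only [F21, lie_smul, leibniz_lie, g.hE10F10, g.lE10F11, g.lH10F11,
    lie_smul, g.lF10F01]
  module
lemma lE01F31 : ⁅g.E01, g.F31⁆ = 0 := by
  simp only [F31, lie_smul, leibniz_lie, g.hE01F10, g.lE01F21, zero_lie, lie_zero,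
    smul_zero, add_zero, zero_add]
lemma lE10F31 : ⁅g.E10, g.F31⁆ = (1 : ℂ) • g.F21 := by
  simp only [F31, lie_smul, leibniz_lie, g.hE10F10, g.lE10F21, g.lH10F21,
    lie_smul, g.lF10F11]
  module
lemma lE01F32 : ⁅g.E01, g.F32⁆ = (1 : ℂ) • g.F31 := by
  simp only [F32, leibniz_lie, g.hE01F01, g.lE01F31, g.lH01F31, lie_zero, add_zero]
lemma lE10F32 : ⁅g.E10, g.F32⁆ = 0 := by
  simp only [F32, leibniz_lie, g.hE10F01, g.lE10F31, zero_lie, zero_add, lie_smul,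
    g.lF01F21, smul_zero]
lemma lE11F10 : ⁅g.E11, g.F10⁆ = (-3 : ℂ) • g.E01 := by
  rw [show g.E11 = ⁅g.E10, g.E01⁆ from rfl, lie_lie, g.hE01F10, g.hE10F10, lie_zero,
    g.lE01H10]
  module
lemma lE11F01 : ⁅g.E11, g.F01⁆ = (1 : ℂ) • g.E10 := by
  rw [show g.E11 = ⁅g.E10, g.E01⁆ from rfl, lie_lie, g.hE01F01, g.hE10F01, lie_zero,
    g.lE10H01]
  module
lemma lE11F11 : ⁅g.E11, g.F11⁆ = (1 : ℂ) • g.H10 + (3 : ℂ) • g.H01 := by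
  rw [show g.F11 = ⁅g.F01, g.F10⁆ from rfl, leibniz_lie, g.lE11F01, g.lE11F10,
    smul_lie, lie_smul, g.hE10F10, g.lF01E01]
  module
lemma lE21F10 : ⁅g.E21, g.F10⁆ = (2 : ℂ) • g.E11 := by
  simp only [E21, smul_lie, lie_lie, g.hE10F10, g.lE11F10, g.lE11H10, lie_smul,
    g.lE10E01]
  module
lemma lE21F01 : ⁅g.E21, g.F01⁆ = 0 := by
  simp only [E21, smul_lie, lie_lie, g.hE10F01, g.lE11F01, lie_zero, lie_smul,
    lie_self, smul_zero, sub_zero, zero_sub, neg_zero, zero_smul]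
lemma lE11F21 : ⁅g.E11, g.F21⁆ = (-2 : ℂ) • g.F10 := by
  rw [show g.E11 = ⁅g.E10, g.E01⁆ from rfl, lie_lie, g.lE01F21, g.lE10F21, lie_zero,
    lie_smul, g.lE01F11]
  module
lemma lE21F11 : ⁅g.E21, g.F11⁆ = (-2 : ℂ) • g.E10 := by
  simp only [E21, smul_lie, lie_lie, g.lE10F11, g.lE11F11, lie_add, lie_smul,
    g.lE11F01, g.lE10H10, g.lE10H01]
  module
lemma lE21F21 : ⁅g.E21, g.F21⁆ = (2 : ℂ) • g.H10 + (3 : ℂ) • g.H01 := by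
  simp only [E21, smul_lie, lie_lie, g.lE10F21, g.lE11F21, lie_smul, g.lE11F11,
    g.hE10F10]
  module
lemma lE11F31 : ⁅g.E11, g.F31⁆ = 0 := by
  rw [show g.E11 = ⁅g.E10, g.E01⁆ from rfl, lie_lie, g.lE01F31, g.lE10F31, lie_zero,
    lie_smul, g.lE01F21, smul_zero, zero_sub, neg_zero]
lemma lE11F32 : ⁅g.E11, g.F32⁆ = (1 : ℂ) • g.F21 := by
  rw [show g.E11 = ⁅g.E10, g.E01⁆ from rfl, lie_lie, g.lE01F32, g.lE10F32, lie_zero,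
    lie_smul, g.lE10F31]
  module
lemma lE21F31 : ⁅g.E21, g.F31⁆ = (-1 : ℂ) • g.F10 := by
  simp only [E21, smul_lie, lie_lie, g.lE10F31, g.lE11F31, lie_smul, g.lE11F21,
    lie_zero, sub_zero]
  module
lemma lE21F32 : ⁅g.E21, g.F32⁆ = (-1 : ℂ) • g.F11 := by
  simp only [E21, smul_lie, lie_lie, g.lE10F32, g.lE11F32, lie_smul, g.lE10F21,
    lie_zero, zero_sub]
  module
lemma lE31F10 : ⁅g.E31, g.F10⁆ = (1 : ℂ) • g.E21 := by
  simp only [E31, smul_lie, lie_lie, g.hE10F10, g.lE21F10, g.lE21H10, lie_smul,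
    g.lE10E11]
  module
lemma lE31F01 : ⁅g.E31, g.F01⁆ = 0 := by
  simp only [E31, smul_lie, lie_lie, g.hE10F01, g.lE21F01, lie_zero, sub_self,
    smul_zero]
lemma lE31F11 : ⁅g.E31, g.F11⁆ = 0 := by
  simp only [E31, smul_lie, lie_lie, g.lE10F11, g.lE21F11, lie_smul, g.lE21F01,
    lie_self, smul_zero, sub_self, sub_zero, zero_sub, neg_zero]
lemma lE31F21 : ⁅g.E31, g.F21⁆ = (-1 : ℂ) • g.E10 := by
  simp only [E31, smul_lie, lie_lie, g.lE10F21, g.lE21F21, lie_add, lie_smul,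
    g.lE21F11, g.lE10H10, g.lE10H01]
  module
lemma lE31F31 : ⁅g.E31, g.F31⁆ = (1 : ℂ) • g.H10 + (1 : ℂ) • g.H01 := by
  simp only [E31, smul_lie, lie_lie, g.lE10F31, g.lE21F31, lie_smul, g.lE21F21,
    g.hE10F10]
  module
lemma lE31F32 : ⁅g.E31, g.F32⁆ = (-1 : ℂ) • g.F01 := by
  simp only [E31, smul_lie, lie_lie, g.lE10F32, g.lE21F32, lie_smul, g.lE10F11,
    lie_zero]
  module
lemma lE32F01 : ⁅g.E32, g.F01⁆ = (1 : ℂ) • g.E31 := by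
  rw [show g.E32 = ⁅g.E31, g.E01⁆ from rfl, lie_lie, g.hE01F01, g.lE31F01, lie_zero,
    g.lE31H01]
  module
lemma lE32F11 : ⁅g.E32, g.F11⁆ = (1 : ℂ) • g.E21 := by
  rw [show g.E32 = ⁅g.E31, g.E01⁆ from rfl, lie_lie, g.lE01F11, g.lE31F11, lie_zero,
    lie_smul, g.lE31F10]
  module
lemma lE32F21 : ⁅g.E32, g.F21⁆ = (-1 : ℂ) • g.E11 := by
  rw [show g.E32 = ⁅g.E31, g.E01⁆ from rfl, lie_lie, g.lE01F21, g.lE31F21, lie_zero,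
    lie_smul, g.lE01E10]
  module
lemma lE32F31 : ⁅g.E32, g.F31⁆ = (-1 : ℂ) • g.E01 := by
  rw [show g.E32 = ⁅g.E31, g.E01⁆ from rfl, lie_lie, g.lE01F31, g.lE31F31, lie_zero,
    lie_add]
  simp only [lie_smul, g.lE01H10, g.lE01H01]
  module
lemma lE32F32 : ⁅g.E32, g.F32⁆ = (1 : ℂ) • g.H10 + (2 : ℂ) • g.H01 := by
  rw [show g.E32 = ⁅g.E31, g.E01⁆ from rfl, lie_lie, g.lE01F32, g.lE31F32, lie_smul,
    g.lE31F31]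
  simp only [lie_smul, g.hE01F01]
  module

/- flipped mixed brackets -/
lemma lF31E01 : ⁅g.F31, g.E01⁆ = 0 := by rw [← lie_skew, g.lE01F31, neg_zero]
lemma lF31E10 : ⁅g.F31, g.E10⁆ = (-1 : ℂ) • g.F21 := by
  rw [← lie_skew, g.lE10F31]; module
lemma lF31E11 : ⁅g.F31, g.E11⁆ = 0 := by rw [← lie_skew, g.lE11F31, neg_zero]
lemma lF31E21 : ⁅g.F31, g.E21⁆ = (1 : ℂ) • g.F10 := by
  rw [← lie_skew, g.lE21F31]; module
lemma lF31E31 : ⁅g.F31, g.E31⁆ = (-1 : ℂ) • g.H10 + (-1 : ℂ) • g.H01 := by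
  rw [← lie_skew, g.lE31F31]; module
lemma lF31E32 : ⁅g.F31, g.E32⁆ = (1 : ℂ) • g.E01 := by
  rw [← lie_skew, g.lE32F31]; module

end G2Gens
namespace G2Gens
variable {L : Type*} [LieRing L] [LieAlgebra ℂ L] (g : G2Gens L)

lemma swE01E31 : ιU g.E01 * ιU g.E31 = ιU g.E31 * ιU g.E01 + (-1 : ℂ) • ιU g.E32 := by
  rw [ι_mul_comm, g.lE01E31, ιU_smul]
lemma swE01E31' (z : UniversalEnvelopingAlgebra ℂ L) :
    ιU g.E01 * (ιU g.E31 * z) = ιU g.E31 * (ιU g.E01 * z) + (-1 : ℂ) • (ιU g.E32 * z) := by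
  rw [← mul_assoc, g.swE01E31, add_mul, smul_mul_assoc, mul_assoc]
lemma swE01F01 : ιU g.E01 * ιU g.F01 = ιU g.F01 * ιU g.E01 + ιU g.H01 := by
  rw [ι_mul_comm, g.hE01F01]
lemma swE01F01' (z : UniversalEnvelopingAlgebra ℂ L) :
    ιU g.E01 * (ιU g.F01 * z) = ιU g.F01 * (ιU g.E01 * z) + ιU g.H01 * z := by
  rw [← mul_assoc, g.swE01F01, add_mul, mul_assoc]
lemma swE01F11 : ιU g.E01 * ιU g.F11 = ιU g.F11 * ιU g.E01 + (1 : ℂ) • ιU g.F10 := by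
  rw [ι_mul_comm, g.lE01F11, ιU_smul]
lemma swE01F11' (z : UniversalEnvelopingAlgebra ℂ L) :
    ιU g.E01 * (ιU g.F11 * z) = ιU g.F11 * (ιU g.E01 * z) + (1 : ℂ) • (ιU g.F10 * z) := by
  rw [← mul_assoc, g.swE01F11, add_mul, smul_mul_assoc, mul_assoc]
lemma swE01F32 : ιU g.E01 * ιU g.F32 = ιU g.F32 * ιU g.E01 + (1 : ℂ) • ιU g.F31 := by
  rw [ι_mul_comm, g.lE01F32, ιU_smul]
lemma swE01F32' (z : UniversalEnvelopingAlgebra ℂ L) :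
    ιU g.E01 * (ιU g.F32 * z) = ιU g.F32 * (ιU g.E01 * z) + (1 : ℂ) • (ιU g.F31 * z) := by
  rw [← mul_assoc, g.swE01F32, add_mul, smul_mul_assoc, mul_assoc]
lemma swE01H01 : ιU g.E01 * ιU g.H01 = ιU g.H01 * ιU g.E01 + (-2 : ℂ) • ιU g.E01 := by
  rw [ι_mul_comm, g.lE01H01, ιU_smul]
lemma swE01H01' (z : UniversalEnvelopingAlgebra ℂ L) :
    ιU g.E01 * (ιU g.H01 * z) = ιU g.H01 * (ιU g.E01 * z) + (-2 : ℂ) • (ιU g.E01 * z) := by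
  rw [← mul_assoc, g.swE01H01, add_mul, smul_mul_assoc, mul_assoc]
lemma swE01H10 : ιU g.E01 * ιU g.H10 = ιU g.H10 * ιU g.E01 + (3 : ℂ) • ιU g.E01 := by
  rw [ι_mul_comm, g.lE01H10, ιU_smul]
lemma swE01H10' (z : UniversalEnvelopingAlgebra ℂ L) :
    ιU g.E01 * (ιU g.H10 * z) = ιU g.H10 * (ιU g.E01 * z) + (3 : ℂ) • (ιU g.E01 * z) := by
  rw [← mul_assoc, g.swE01H10, add_mul, smul_mul_assoc, mul_assoc]
lemma swE10E01 : ιU g.E10 * ιU g.E01 = ιU g.E01 * ιU g.E10 + ιU g.E11 := by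
  rw [ι_mul_comm, g.lE10E01]
lemma swE10E01' (z : UniversalEnvelopingAlgebra ℂ L) :
    ιU g.E10 * (ιU g.E01 * z) = ιU g.E01 * (ιU g.E10 * z) + ιU g.E11 * z := by
  rw [← mul_assoc, g.swE10E01, add_mul, mul_assoc]
lemma swE10E11 : ιU g.E10 * ιU g.E11 = ιU g.E11 * ιU g.E10 + (-2 : ℂ) • ιU g.E21 := by
  rw [ι_mul_comm, g.lE10E11, ιU_smul]
lemma swE10E11' (z : UniversalEnvelopingAlgebra ℂ L) :
    ιU g.E10 * (ιU g.E11 * z) = ιU g.E11 * (ιU g.E10 * z) + (-2 : ℂ) • (ιU g.E21 * z) := by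
  rw [← mul_assoc, g.swE10E11, add_mul, smul_mul_assoc, mul_assoc]
lemma swE10E21 : ιU g.E10 * ιU g.E21 = ιU g.E21 * ιU g.E10 + (-3 : ℂ) • ιU g.E31 := by
  rw [ι_mul_comm, g.lE10E21, ιU_smul]
lemma swE10E21' (z : UniversalEnvelopingAlgebra ℂ L) :
    ιU g.E10 * (ιU g.E21 * z) = ιU g.E21 * (ιU g.E10 * z) + (-3 : ℂ) • (ιU g.E31 * z) := by
  rw [← mul_assoc, g.swE10E21, add_mul, smul_mul_assoc, mul_assoc]
lemma swE10F11 : ιU g.E10 * ιU g.F11 = ιU g.F11 * ιU g.E10 + (-3 : ℂ) • ιU g.F01 := by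
  rw [ι_mul_comm, g.lE10F11, ιU_smul]
lemma swE10F11' (z : UniversalEnvelopingAlgebra ℂ L) :
    ιU g.E10 * (ιU g.F11 * z) = ιU g.F11 * (ιU g.E10 * z) + (-3 : ℂ) • (ιU g.F01 * z) := by
  rw [← mul_assoc, g.swE10F11, add_mul, smul_mul_assoc, mul_assoc]
lemma swE10F21 : ιU g.E10 * ιU g.F21 = ιU g.F21 * ιU g.E10 + (2 : ℂ) • ιU g.F11 := by
  rw [ι_mul_comm, g.lE10F21, ιU_smul]
lemma swE10F21' (z : UniversalEnvelopingAlgebra ℂ L) :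
    ιU g.E10 * (ιU g.F21 * z) = ιU g.F21 * (ιU g.E10 * z) + (2 : ℂ) • (ιU g.F11 * z) := by
  rw [← mul_assoc, g.swE10F21, add_mul, smul_mul_assoc, mul_assoc]
lemma swE10F31 : ιU g.E10 * ιU g.F31 = ιU g.F31 * ιU g.E10 + (1 : ℂ) • ιU g.F21 := by
  rw [ι_mul_comm, g.lE10F31, ιU_smul]
lemma swE10F31' (z : UniversalEnvelopingAlgebra ℂ L) :
    ιU g.E10 * (ιU g.F31 * z) = ιU g.F31 * (ιU g.E10 * z) + (1 : ℂ) • (ιU g.F21 * z) := by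
  rw [← mul_assoc, g.swE10F31, add_mul, smul_mul_assoc, mul_assoc]
lemma swE11F11 : ιU g.E11 * ιU g.F11 = ιU g.F11 * ιU g.E11 + ((1 : ℂ) • ιU g.H10 + (3 : ℂ) • ιU g.H01) := by
  rw [ι_mul_comm, g.lE11F11, ιU_add, ιU_smul, ιU_smul]
lemma swE11F11' (z : UniversalEnvelopingAlgebra ℂ L) :
    ιU g.E11 * (ιU g.F11 * z) = ιU g.F11 * (ιU g.E11 * z) + ((1 : ℂ) • (ιU g.H10 * z) + (3 : ℂ) • (ιU g.H01 * z)) := by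
  rw [← mul_assoc, g.swE11F11, add_mul, add_mul, smul_mul_assoc, smul_mul_assoc, mul_assoc]
lemma swE11F21 : ιU g.E11 * ιU g.F21 = ιU g.F21 * ιU g.E11 + (-2 : ℂ) • ιU g.F10 := by
  rw [ι_mul_comm, g.lE11F21, ιU_smul]
lemma swE11F21' (z : UniversalEnvelopingAlgebra ℂ L) :
    ιU g.E11 * (ιU g.F21 * z) = ιU g.F21 * (ιU g.E11 * z) + (-2 : ℂ) • (ιU g.F10 * z) := by
  rw [← mul_assoc, g.swE11F21, add_mul, smul_mul_assoc, mul_assoc]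
lemma swE11F32 : ιU g.E11 * ιU g.F32 = ιU g.F32 * ιU g.E11 + (1 : ℂ) • ιU g.F21 := by
  rw [ι_mul_comm, g.lE11F32, ιU_smul]
lemma swE11F32' (z : UniversalEnvelopingAlgebra ℂ L) :
    ιU g.E11 * (ιU g.F32 * z) = ιU g.F32 * (ιU g.E11 * z) + (1 : ℂ) • (ιU g.F21 * z) := by
  rw [← mul_assoc, g.swE11F32, add_mul, smul_mul_assoc, mul_assoc]
lemma swE11H01 : ιU g.E11 * ιU g.H01 = ιU g.H01 * ιU g.E11 + (-1 : ℂ) • ιU g.E11 := by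
  rw [ι_mul_comm, g.lE11H01, ιU_smul]
lemma swE11H01' (z : UniversalEnvelopingAlgebra ℂ L) :
    ιU g.E11 * (ιU g.H01 * z) = ιU g.H01 * (ιU g.E11 * z) + (-1 : ℂ) • (ιU g.E11 * z) := by
  rw [← mul_assoc, g.swE11H01, add_mul, smul_mul_assoc, mul_assoc]
lemma swE11H10 : ιU g.E11 * ιU g.H10 = ιU g.H10 * ιU g.E11 + (1 : ℂ) • ιU g.E11 := by
  rw [ι_mul_comm, g.lE11H10, ιU_smul]
lemma swE11H10' (z : UniversalEnvelopingAlgebra ℂ L) :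
    ιU g.E11 * (ιU g.H10 * z) = ιU g.H10 * (ιU g.E11 * z) + (1 : ℂ) • (ιU g.E11 * z) := by
  rw [← mul_assoc, g.swE11H10, add_mul, smul_mul_assoc, mul_assoc]
lemma swE21E11 : ιU g.E21 * ιU g.E11 = ιU g.E11 * ιU g.E21 + (3 : ℂ) • ιU g.E32 := by
  rw [ι_mul_comm, g.lE21E11, ιU_smul]
lemma swE21E11' (z : UniversalEnvelopingAlgebra ℂ L) :
    ιU g.E21 * (ιU g.E11 * z) = ιU g.E11 * (ιU g.E21 * z) + (3 : ℂ) • (ιU g.E32 * z) := by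
  rw [← mul_assoc, g.swE21E11, add_mul, smul_mul_assoc, mul_assoc]
lemma swE21F21 : ιU g.E21 * ιU g.F21 = ιU g.F21 * ιU g.E21 + ((2 : ℂ) • ιU g.H10 + (3 : ℂ) • ιU g.H01) := by
  rw [ι_mul_comm, g.lE21F21, ιU_add, ιU_smul, ιU_smul]
lemma swE21F21' (z : UniversalEnvelopingAlgebra ℂ L) :
    ιU g.E21 * (ιU g.F21 * z) = ιU g.F21 * (ιU g.E21 * z) + ((2 : ℂ) • (ιU g.H10 * z) + (3 : ℂ) • (ιU g.H01 * z)) := by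
  rw [← mul_assoc, g.swE21F21, add_mul, add_mul, smul_mul_assoc, smul_mul_assoc, mul_assoc]
lemma swE21F31 : ιU g.E21 * ιU g.F31 = ιU g.F31 * ιU g.E21 + (-1 : ℂ) • ιU g.F10 := by
  rw [ι_mul_comm, g.lE21F31, ιU_smul]
lemma swE21F31' (z : UniversalEnvelopingAlgebra ℂ L) :
    ιU g.E21 * (ιU g.F31 * z) = ιU g.F31 * (ιU g.E21 * z) + (-1 : ℂ) • (ιU g.F10 * z) := by
  rw [← mul_assoc, g.swE21F31, add_mul, smul_mul_assoc, mul_assoc]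
lemma swE21F32 : ιU g.E21 * ιU g.F32 = ιU g.F32 * ιU g.E21 + (-1 : ℂ) • ιU g.F11 := by
  rw [ι_mul_comm, g.lE21F32, ιU_smul]
lemma swE21F32' (z : UniversalEnvelopingAlgebra ℂ L) :
    ιU g.E21 * (ιU g.F32 * z) = ιU g.F32 * (ιU g.E21 * z) + (-1 : ℂ) • (ιU g.F11 * z) := by
  rw [← mul_assoc, g.swE21F32, add_mul, smul_mul_assoc, mul_assoc]
lemma swE21H01 : ιU g.E21 * ιU g.H01 = ιU g.H01 * ιU g.E21 := by
  rw [ι_mul_comm, g.lE21H01, ιU_zero, add_zero]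
lemma swE21H01' (z : UniversalEnvelopingAlgebra ℂ L) :
    ιU g.E21 * (ιU g.H01 * z) = ιU g.H01 * (ιU g.E21 * z) := by
  rw [← mul_assoc, g.swE21H01, mul_assoc]
lemma swE21H10 : ιU g.E21 * ιU g.H10 = ιU g.H10 * ιU g.E21 + (-1 : ℂ) • ιU g.E21 := by
  rw [ι_mul_comm, g.lE21H10, ιU_smul]
lemma swE21H10' (z : UniversalEnvelopingAlgebra ℂ L) :
    ιU g.E21 * (ιU g.H10 * z) = ιU g.H10 * (ιU g.E21 * z) + (-1 : ℂ) • (ιU g.E21 * z) := by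
  rw [← mul_assoc, g.swE21H10, add_mul, smul_mul_assoc, mul_assoc]
lemma swE31F31 : ιU g.E31 * ιU g.F31 = ιU g.F31 * ιU g.E31 + ((1 : ℂ) • ιU g.H10 + (1 : ℂ) • ιU g.H01) := by
  rw [ι_mul_comm, g.lE31F31, ιU_add, ιU_smul, ιU_smul]
lemma swE31F31' (z : UniversalEnvelopingAlgebra ℂ L) :
    ιU g.E31 * (ιU g.F31 * z) = ιU g.F31 * (ιU g.E31 * z) + ((1 : ℂ) • (ιU g.H10 * z) + (1 : ℂ) • (ιU g.H01 * z)) := by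
  rw [← mul_assoc, g.swE31F31, add_mul, add_mul, smul_mul_assoc, smul_mul_assoc, mul_assoc]
lemma swE31F32 : ιU g.E31 * ιU g.F32 = ιU g.F32 * ιU g.E31 + (-1 : ℂ) • ιU g.F01 := by
  rw [ι_mul_comm, g.lE31F32, ιU_smul]
lemma swE31F32' (z : UniversalEnvelopingAlgebra ℂ L) :
    ιU g.E31 * (ιU g.F32 * z) = ιU g.F32 * (ιU g.E31 * z) + (-1 : ℂ) • (ιU g.F01 * z) := by
  rw [← mul_assoc, g.swE31F32, add_mul, smul_mul_assoc, mul_assoc]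
lemma swE31H01 : ιU g.E31 * ιU g.H01 = ιU g.H01 * ιU g.E31 + (1 : ℂ) • ιU g.E31 := by
  rw [ι_mul_comm, g.lE31H01, ιU_smul]
lemma swE31H01' (z : UniversalEnvelopingAlgebra ℂ L) :
    ιU g.E31 * (ιU g.H01 * z) = ιU g.H01 * (ιU g.E31 * z) + (1 : ℂ) • (ιU g.E31 * z) := by
  rw [← mul_assoc, g.swE31H01, add_mul, smul_mul_assoc, mul_assoc]
lemma swE31H10 : ιU g.E31 * ιU g.H10 = ιU g.H10 * ιU g.E31 + (-3 : ℂ) • ιU g.E31 := by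
  rw [ι_mul_comm, g.lE31H10, ιU_smul]
lemma swE31H10' (z : UniversalEnvelopingAlgebra ℂ L) :
    ιU g.E31 * (ιU g.H10 * z) = ιU g.H10 * (ιU g.E31 * z) + (-3 : ℂ) • (ιU g.E31 * z) := by
  rw [← mul_assoc, g.swE31H10, add_mul, smul_mul_assoc, mul_assoc]
lemma swE32F01 : ιU g.E32 * ιU g.F01 = ιU g.F01 * ιU g.E32 + (1 : ℂ) • ιU g.E31 := by
  rw [ι_mul_comm, g.lE32F01, ιU_smul]
lemma swE32F01' (z : UniversalEnvelopingAlgebra ℂ L) :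
    ιU g.E32 * (ιU g.F01 * z) = ιU g.F01 * (ιU g.E32 * z) + (1 : ℂ) • (ιU g.E31 * z) := by
  rw [← mul_assoc, g.swE32F01, add_mul, smul_mul_assoc, mul_assoc]
lemma swE32F11 : ιU g.E32 * ιU g.F11 = ιU g.F11 * ιU g.E32 + (1 : ℂ) • ιU g.E21 := by
  rw [ι_mul_comm, g.lE32F11, ιU_smul]
lemma swE32F11' (z : UniversalEnvelopingAlgebra ℂ L) :
    ιU g.E32 * (ιU g.F11 * z) = ιU g.F11 * (ιU g.E32 * z) + (1 : ℂ) • (ιU g.E21 * z) := by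
  rw [← mul_assoc, g.swE32F11, add_mul, smul_mul_assoc, mul_assoc]
lemma swE32F21 : ιU g.E32 * ιU g.F21 = ιU g.F21 * ιU g.E32 + (-1 : ℂ) • ιU g.E11 := by
  rw [ι_mul_comm, g.lE32F21, ιU_smul]
lemma swE32F21' (z : UniversalEnvelopingAlgebra ℂ L) :
    ιU g.E32 * (ιU g.F21 * z) = ιU g.F21 * (ιU g.E32 * z) + (-1 : ℂ) • (ιU g.E11 * z) := by
  rw [← mul_assoc, g.swE32F21, add_mul, smul_mul_assoc, mul_assoc]
lemma swE32F31 : ιU g.E32 * ιU g.F31 = ιU g.F31 * ιU g.E32 + (-1 : ℂ) • ιU g.E01 := by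
  rw [ι_mul_comm, g.lE32F31, ιU_smul]
lemma swE32F31' (z : UniversalEnvelopingAlgebra ℂ L) :
    ιU g.E32 * (ιU g.F31 * z) = ιU g.F31 * (ιU g.E32 * z) + (-1 : ℂ) • (ιU g.E01 * z) := by
  rw [← mul_assoc, g.swE32F31, add_mul, smul_mul_assoc, mul_assoc]
lemma swE32F32 : ιU g.E32 * ιU g.F32 = ιU g.F32 * ιU g.E32 + ((1 : ℂ) • ιU g.H10 + (2 : ℂ) • ιU g.H01) := by
  rw [ι_mul_comm, g.lE32F32, ιU_add, ιU_smul, ιU_smul]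
lemma swE32F32' (z : UniversalEnvelopingAlgebra ℂ L) :
    ιU g.E32 * (ιU g.F32 * z) = ιU g.F32 * (ιU g.E32 * z) + ((1 : ℂ) • (ιU g.H10 * z) + (2 : ℂ) • (ιU g.H01 * z)) := by
  rw [← mul_assoc, g.swE32F32, add_mul, add_mul, smul_mul_assoc, smul_mul_assoc, mul_assoc]
lemma swF01F31 : ιU g.F01 * ιU g.F31 = ιU g.F31 * ιU g.F01 + ιU g.F32 := by
  rw [ι_mul_comm, g.lF01F31]
lemma swF01F31' (z : UniversalEnvelopingAlgebra ℂ L) :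
    ιU g.F01 * (ιU g.F31 * z) = ιU g.F31 * (ιU g.F01 * z) + ιU g.F32 * z := by
  rw [← mul_assoc, g.swF01F31, add_mul, mul_assoc]
lemma swF11F21 : ιU g.F11 * ιU g.F21 = ιU g.F21 * ιU g.F11 + (3 : ℂ) • ιU g.F32 := by
  rw [ι_mul_comm, g.lF11F21, ιU_smul]
lemma swF11F21' (z : UniversalEnvelopingAlgebra ℂ L) :
    ιU g.F11 * (ιU g.F21 * z) = ιU g.F21 * (ιU g.F11 * z) + (3 : ℂ) • (ιU g.F32 * z) := by
  rw [← mul_assoc, g.swF11F21, add_mul, smul_mul_assoc, mul_assoc]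
lemma swH01F01 : ιU g.H01 * ιU g.F01 = ιU g.F01 * ιU g.H01 + (-2 : ℂ) • ιU g.F01 := by
  rw [ι_mul_comm, g.hH01F01, ιU_smul]
lemma swH01F01' (z : UniversalEnvelopingAlgebra ℂ L) :
    ιU g.H01 * (ιU g.F01 * z) = ιU g.F01 * (ιU g.H01 * z) + (-2 : ℂ) • (ιU g.F01 * z) := by
  rw [← mul_assoc, g.swH01F01, add_mul, smul_mul_assoc, mul_assoc]
lemma swH01F11 : ιU g.H01 * ιU g.F11 = ιU g.F11 * ιU g.H01 + (-1 : ℂ) • ιU g.F11 := by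
  rw [ι_mul_comm, g.lH01F11, ιU_smul]
lemma swH01F11' (z : UniversalEnvelopingAlgebra ℂ L) :
    ιU g.H01 * (ιU g.F11 * z) = ιU g.F11 * (ιU g.H01 * z) + (-1 : ℂ) • (ιU g.F11 * z) := by
  rw [← mul_assoc, g.swH01F11, add_mul, smul_mul_assoc, mul_assoc]
lemma swH01F21 : ιU g.H01 * ιU g.F21 = ιU g.F21 * ιU g.H01 := by
  rw [ι_mul_comm, g.lH01F21, ιU_zero, add_zero]
lemma swH01F21' (z : UniversalEnvelopingAlgebra ℂ L) :
    ιU g.H01 * (ιU g.F21 * z) = ιU g.F21 * (ιU g.H01 * z) := by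
  rw [← mul_assoc, g.swH01F21, mul_assoc]
lemma swH01F31 : ιU g.H01 * ιU g.F31 = ιU g.F31 * ιU g.H01 + (1 : ℂ) • ιU g.F31 := by
  rw [ι_mul_comm, g.lH01F31, ιU_smul]
lemma swH01F31' (z : UniversalEnvelopingAlgebra ℂ L) :
    ιU g.H01 * (ιU g.F31 * z) = ιU g.F31 * (ιU g.H01 * z) + (1 : ℂ) • (ιU g.F31 * z) := by
  rw [← mul_assoc, g.swH01F31, add_mul, smul_mul_assoc, mul_assoc]
lemma swH10F01 : ιU g.H10 * ιU g.F01 = ιU g.F01 * ιU g.H10 + (3 : ℂ) • ιU g.F01 := by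
  rw [ι_mul_comm, g.hH10F01, ιU_smul]
lemma swH10F01' (z : UniversalEnvelopingAlgebra ℂ L) :
    ιU g.H10 * (ιU g.F01 * z) = ιU g.F01 * (ιU g.H10 * z) + (3 : ℂ) • (ιU g.F01 * z) := by
  rw [← mul_assoc, g.swH10F01, add_mul, smul_mul_assoc, mul_assoc]
lemma swH10F11 : ιU g.H10 * ιU g.F11 = ιU g.F11 * ιU g.H10 + (1 : ℂ) • ιU g.F11 := by
  rw [ι_mul_comm, g.lH10F11, ιU_smul]
lemma swH10F11' (z : UniversalEnvelopingAlgebra ℂ L) :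
    ιU g.H10 * (ιU g.F11 * z) = ιU g.F11 * (ιU g.H10 * z) + (1 : ℂ) • (ιU g.F11 * z) := by
  rw [← mul_assoc, g.swH10F11, add_mul, smul_mul_assoc, mul_assoc]
lemma swH10F21 : ιU g.H10 * ιU g.F21 = ιU g.F21 * ιU g.H10 + (-1 : ℂ) • ιU g.F21 := by
  rw [ι_mul_comm, g.lH10F21, ιU_smul]
lemma swH10F21' (z : UniversalEnvelopingAlgebra ℂ L) :
    ιU g.H10 * (ιU g.F21 * z) = ιU g.F21 * (ιU g.H10 * z) + (-1 : ℂ) • (ιU g.F21 * z) := by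
  rw [← mul_assoc, g.swH10F21, add_mul, smul_mul_assoc, mul_assoc]
lemma swH10F31 : ιU g.H10 * ιU g.F31 = ιU g.F31 * ιU g.H10 + (-3 : ℂ) • ιU g.F31 := by
  rw [ι_mul_comm, g.lH10F31, ιU_smul]
lemma swH10F31' (z : UniversalEnvelopingAlgebra ℂ L) :
    ιU g.H10 * (ιU g.F31 * z) = ιU g.F31 * (ιU g.H10 * z) + (-3 : ℂ) • (ιU g.F31 * z) := by
  rw [← mul_assoc, g.swH10F31, add_mul, smul_mul_assoc, mul_assoc]

end G2Gens
namespace G2Gens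
variable {L : Type*} [LieRing L] [LieAlgebra ℂ L] (g : G2Gens L)

/-- Membership in the left ideal `U(𝔤)𝔫₊`. -/
def MemN (f : UniversalEnvelopingAlgebra ℂ L) : Prop :=
  ∃ A B : UniversalEnvelopingAlgebra ℂ L, f = A * ιU g.E10 + B * ιU g.E01

lemma memN_add {f h : UniversalEnvelopingAlgebra ℂ L} (hf : g.MemN f) (hh : g.MemN h) :
    g.MemN (f + h) := by
  obtain ⟨A, B, rfl⟩ := hf; obtain ⟨C, D, rfl⟩ := hh
  exact ⟨A + C, B + D, by noncomm_ring⟩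
lemma memN_smul (r : ℂ) {f : UniversalEnvelopingAlgebra ℂ L} (hf : g.MemN f) :
    g.MemN (r • f) := by
  obtain ⟨A, B, rfl⟩ := hf
  exact ⟨r • A, r • B, by rw [smul_add, smul_mul_assoc, smul_mul_assoc]⟩
lemma memN_sub {f h : UniversalEnvelopingAlgebra ℂ L} (hf : g.MemN f) (hh : g.MemN h) :
    g.MemN (f - h) := by
  obtain ⟨A, B, rfl⟩ := hf; obtain ⟨C, D, rfl⟩ := hh
  exact ⟨A - C, B - D, by noncomm_ring⟩
lemma memN_E10 (f : UniversalEnvelopingAlgebra ℂ L) : g.MemN (f * ιU g.E10) :=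
  ⟨f, 0, by simp⟩
lemma memN_E01 (f : UniversalEnvelopingAlgebra ℂ L) : g.MemN (f * ιU g.E01) :=
  ⟨0, f, by simp⟩
lemma memN_E11 (f : UniversalEnvelopingAlgebra ℂ L) : g.MemN (f * ιU g.E11) := by
  refine ⟨-(f * ιU g.E01), f * ιU g.E10, ?_⟩
  rw [show ιU g.E11 = ιU g.E10 * ιU g.E01 - ιU g.E01 * ιU g.E10 from by
    rw [show g.E11 = ⁅g.E10, g.E01⁆ from rfl, ι_lie]]
  noncomm_ring
lemma memN_E21 (f : UniversalEnvelopingAlgebra ℂ L) : g.MemN (f * ιU g.E21) := by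
  have h2 : f * ιU g.E21 = (2 : ℂ)⁻¹ • ((f * ιU g.E11) * ιU g.E10)
      - (2 : ℂ)⁻¹ • ((f * ιU g.E10) * ιU g.E11) := by
    rw [show ιU g.E21 = (2 : ℂ)⁻¹ • (ιU g.E11 * ιU g.E10 - ιU g.E10 * ιU g.E11) from by
      rw [show g.E21 = (2 : ℂ)⁻¹ • ⁅g.E11, g.E10⁆ from rfl, ιU_smul, ι_lie]]
    rw [mul_smul_comm, mul_sub, ← mul_assoc, ← mul_assoc, smul_sub]
  rw [h2]
  exact g.memN_sub (g.memN_smul _ (g.memN_E10 _)) (g.memN_smul _ (g.memN_E11 _))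
lemma memN_E31 (f : UniversalEnvelopingAlgebra ℂ L) : g.MemN (f * ιU g.E31) := by
  have h2 : f * ιU g.E31 = (3 : ℂ)⁻¹ • ((f * ιU g.E21) * ιU g.E10)
      - (3 : ℂ)⁻¹ • ((f * ιU g.E10) * ιU g.E21) := by
    rw [show ιU g.E31 = (3 : ℂ)⁻¹ • (ιU g.E21 * ιU g.E10 - ιU g.E10 * ιU g.E21) from by
      rw [show g.E31 = (3 : ℂ)⁻¹ • ⁅g.E21, g.E10⁆ from rfl, ιU_smul, ι_lie]]
    rw [mul_smul_comm, mul_sub, ← mul_assoc, ← mul_assoc, smul_sub]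
  rw [h2]
  exact g.memN_sub (g.memN_smul _ (g.memN_E10 _)) (g.memN_smul _ (g.memN_E21 _))
lemma memN_E32 (f : UniversalEnvelopingAlgebra ℂ L) : g.MemN (f * ιU g.E32) := by
  have h2 : f * ιU g.E32 = (f * ιU g.E31) * ιU g.E01 - (f * ιU g.E01) * ιU g.E31 := by
    rw [show ιU g.E32 = ιU g.E31 * ιU g.E01 - ιU g.E01 * ιU g.E31 from by
      rw [show g.E32 = ⁅g.E31, g.E01⁆ from rfl, ι_lie]]
    rw [mul_sub, ← mul_assoc, ← mul_assoc]
  rw [h2]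
  exact g.memN_sub (g.memN_E01 _) (g.memN_E31 _)

set_option maxHeartbeats 3200000 in
lemma key2 : adU g.E10 (adU g.E10 (adU g.F31 (adU g.F31 g.bU))) =
    (-12 : ℂ) • (ιU g.F31 * (ιU g.E31))
      + (4 : ℂ) • (ιU g.F21 * (ιU g.E21))
      + (4 : ℂ) • (ιU g.F11 * (ιU g.E11))
      + (-12 : ℂ) • (ιU g.F01 * (ιU g.E01)) := by
  simp only [bU, adU_mul, adU_sub, adU_add, adU_smul, adU_neg, adU_zero, adU_ι, lie_self,
    g.lF31E01, g.lF31E10, g.lF31E11, g.lF31E21, g.lF31E31, g.lF31E32, g.lF31F01,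
    g.lF31F21, g.lF31F32, g.lF31H10, g.lF31H01,
    g.lE10E01, g.lE10E11, g.lE10E21, g.lE10E32, g.hE10F10, g.lE10F11, g.lE10F21,
    g.lE10F31, g.lE10F32, g.lE10H10, g.lE10H01,
    ιU_smul, ιU_add, ιU_zero, ιU_neg, mul_add, add_mul, mul_sub, sub_mul,
    smul_mul_assoc, mul_smul_comm, mul_zero, zero_mul, smul_zero, zero_add, add_zero,
    smul_add, smul_sub, smul_smul, neg_mul, mul_neg]
  simp only [swE01E31', swE01F01', swE01F11', swE01F32', swE01H01', swE01H10',
    swE10E01', swE10E11', swE10E21', swE10F11', swE10F21', swE10F31', swE11F11',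
    swE11F21', swE11F32', swE11H01', swE11H10', swE21E11', swE21F21', swE21F31',
    swE21F32', swE21H01', swE21H10', swE31F31', swE31F32', swE31H01', swE31H10',
    swE32F01', swE32F11', swE32F21', swE32F31', swE32F32', swF01F31', swF11F21',
    swH01F01', swH01F11', swH01F21', swH01F31', swH10F01', swH10F11', swH10F21',
    swH10F31',
    swE01E31, swE01F01, swE01F11, swE01F32, swE01H01, swE01H10,
    swE10E01, swE10E11, swE10E21, swE10F11, swE10F21, swE10F31, swE11F11,
    swE11F21, swE11F32, swE11H01, swE11H10, swE21E11, swE21F21, swE21F31,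
    swE21F32, swE21H01, swE21H10, swE31F31, swE31F32, swE31H01, swE31H10,
    swE32F01, swE32F11, swE32F21, swE32F31, swE32F32, swF01F31, swF11F21,
    swH01F01, swH01F11, swH01F21, swH01F31, swH10F01, swH10F11, swH10F21,
    swH10F31, mul_assoc, mul_add, add_mul, smul_mul_assoc, mul_smul_comm,
    smul_add, smul_sub, smul_smul, mul_zero, zero_mul, smul_zero, zero_add, add_zero]
  module

set_option maxHeartbeats 6400000 in
lemma key3 : adU g.E10 (adU g.E10 (adU g.E10 (adU g.F31 (adU g.F31 (adU g.F31 g.cU))))) =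
    (-72 : ℂ) • (ιU g.F32 * (ιU g.E11 * (ιU g.E21)))
      + (72 : ℂ) • (ιU g.F32 * (ιU g.E31 * (ιU g.E01)))
      + (-216 : ℂ) • (ιU g.F32 * (ιU g.E32))
      + (72 : ℂ) • (ιU g.F31 * (ιU g.F01 * (ιU g.E32)))
      + (36 : ℂ) • (ιU g.F31 * (ιU g.H10 * (ιU g.E31)))
      + (72 : ℂ) • (ιU g.F31 * (ιU g.H01 * (ιU g.E31)))
      + (36 : ℂ) • (ιU g.F31 * (ιU g.E31))
      + (-72 : ℂ) • (ιU g.F21 * (ιU g.F11 * (ιU g.E32)))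
      + (-36 : ℂ) • (ιU g.F21 * (ιU g.H10 * (ιU g.E21)))
      + (-72 : ℂ) • (ιU g.F21 * (ιU g.H01 * (ιU g.E21)))
      + (-36 : ℂ) • (ιU g.F21 * (ιU g.E21))
      + (36 : ℂ) • (ιU g.F11 * (ιU g.H10 * (ιU g.E11)))
      + (72 : ℂ) • (ιU g.F11 * (ιU g.H01 * (ιU g.E11)))
      + (36 : ℂ) • (ιU g.F11 * (ιU g.E11))
      + (-36 : ℂ) • (ιU g.F01 * (ιU g.H10 * (ιU g.E01)))
      + (-72 : ℂ) • (ιU g.F01 * (ιU g.H01 * (ιU g.E01)))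
      + (-36 : ℂ) • (ιU g.F01 * (ιU g.E01)) := by
  simp only [cU, adU_mul, adU_sub, adU_add, adU_smul, adU_neg, adU_zero, adU_ι, lie_self,
    g.lF31E01, g.lF31E10, g.lF31E11, g.lF31E21, g.lF31E31, g.lF31E32, g.lF31F01,
    g.lF31F21, g.lF31F32, g.lF31H10, g.lF31H01,
    g.lE10E01, g.lE10E11, g.lE10E21, g.lE10E32, g.hE10F10, g.lE10F11, g.lE10F21,
    g.lE10F31, g.lE10F32, g.lE10H10, g.lE10H01,
    ιU_smul, ιU_add, ιU_zero, ιU_neg, mul_add, add_mul, mul_sub, sub_mul,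
    smul_mul_assoc, mul_smul_comm, mul_zero, zero_mul, smul_zero, zero_add, add_zero,
    smul_add, smul_sub, smul_smul, neg_mul, mul_neg]
  simp only [swE01E31', swE01F01', swE01F11', swE01F32', swE01H01', swE01H10',
    swE10E01', swE10E11', swE10E21', swE10F11', swE10F21', swE10F31', swE11F11',
    swE11F21', swE11F32', swE11H01', swE11H10', swE21E11', swE21F21', swE21F31',
    swE21F32', swE21H01', swE21H10', swE31F31', swE31F32', swE31H01', swE31H10',
    swE32F01', swE32F11', swE32F21', swE32F31', swE32F32', swF01F31', swF11F21',
    swH01F01', swH01F11', swH01F21', swH01F31', swH10F01', swH10F11', swH10F21',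
    swH10F31',
    swE01E31, swE01F01, swE01F11, swE01F32, swE01H01, swE01H10,
    swE10E01, swE10E11, swE10E21, swE10F11, swE10F21, swE10F31, swE11F11,
    swE11F21, swE11F32, swE11H01, swE11H10, swE21E11, swE21F21, swE21F31,
    swE21F32, swE21H01, swE21H10, swE31F31, swE31F32, swE31H01, swE31H10,
    swE32F01, swE32F11, swE32F21, swE32F31, swE32F32, swF01F31, swF11F21,
    swH01F01, swH01F11, swH01F21, swH01F31, swH10F01, swH10F11, swH10F21,
    swH10F31, mul_assoc, mul_add, add_mul, smul_mul_assoc, mul_smul_comm,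
    smul_add, smul_sub, smul_smul, mul_zero, zero_mul, smul_zero, zero_add, add_zero]
  module

end G2Gens
/-- **Lemma A.5, second family (lem-secondstep).**  Congruences in `U(𝔤)` modulo `U(𝔤)𝔫₊`
for the operators `(E₁₀^n F₃₁^n)_L` applied to `a`, `b`, `c`. -/
theorem G2Gens.E10F31_congruences
    {L : Type*} [LieRing L] [LieAlgebra ℂ L] (g : G2Gens L) :
    (∃ C₁ : ℚ, C₁ ≠ 0 ∧ adU g.E10 (adU g.F31 g.aU) = (C₁ : ℂ) • ιU g.H10) ∧
    g.EqModN ((adU g.E10)^[2] ((adU g.F31)^[2] g.bU)) 0 ∧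
    g.EqModN ((adU g.E10)^[3] ((adU g.F31)^[3] g.cU)) 0 := by
  refine ⟨⟨1, one_ne_zero, ?_⟩, ?_, ?_⟩
  · rw [G2Gens.aU, adU_ι, g.lF31E21, ιU_smul, adU_smul, adU_ι, g.hE10F10]
    norm_num
  · have mem : g.MemN ((-12 : ℂ) • (ιU g.F31 * (ιU g.E31))
      + (4 : ℂ) • (ιU g.F21 * (ιU g.E21))
      + (4 : ℂ) • (ιU g.F11 * (ιU g.E11))
      + (-12 : ℂ) • (ιU g.F01 * (ιU g.E01))) := by
      repeat' apply g.memN_add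
      all_goals apply g.memN_smul
      all_goals first
        | exact g.memN_E01 _ | exact g.memN_E11 _ | exact g.memN_E21 _
        | exact g.memN_E31 _
    obtain ⟨A, B, h⟩ := mem
    refine ⟨A, B, ?_⟩
    rw [sub_zero, show (adU g.E10)^[2] ((adU g.F31)^[2] g.bU)
      = adU g.E10 (adU g.E10 (adU g.F31 (adU g.F31 g.bU))) from rfl, g.key2, h]
  · have mem : g.MemN ((-72 : ℂ) • (ιU g.F32 * (ιU g.E11 * (ιU g.E21)))
      + (72 : ℂ) • (ιU g.F32 * (ιU g.E31 * (ιU g.E01)))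
      + (-216 : ℂ) • (ιU g.F32 * (ιU g.E32))
      + (72 : ℂ) • (ιU g.F31 * (ιU g.F01 * (ιU g.E32)))
      + (36 : ℂ) • (ιU g.F31 * (ιU g.H10 * (ιU g.E31)))
      + (72 : ℂ) • (ιU g.F31 * (ιU g.H01 * (ιU g.E31)))
      + (36 : ℂ) • (ιU g.F31 * (ιU g.E31))
      + (-72 : ℂ) • (ιU g.F21 * (ιU g.F11 * (ιU g.E32)))
      + (-36 : ℂ) • (ιU g.F21 * (ιU g.H10 * (ιU g.E21)))
      + (-72 : ℂ) • (ιU g.F21 * (ιU g.H01 * (ιU g.E21)))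
      + (-36 : ℂ) • (ιU g.F21 * (ιU g.E21))
      + (36 : ℂ) • (ιU g.F11 * (ιU g.H10 * (ιU g.E11)))
      + (72 : ℂ) • (ιU g.F11 * (ιU g.H01 * (ιU g.E11)))
      + (36 : ℂ) • (ιU g.F11 * (ιU g.E11))
      + (-36 : ℂ) • (ιU g.F01 * (ιU g.H10 * (ιU g.E01)))
      + (-72 : ℂ) • (ιU g.F01 * (ιU g.H01 * (ιU g.E01)))
      + (-36 : ℂ) • (ιU g.F01 * (ιU g.E01))) := by
      try simp only [← mul_assoc]
      repeat' apply g.memN_add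
      all_goals apply g.memN_smul
      all_goals first
        | exact g.memN_E01 _ | exact g.memN_E11 _ | exact g.memN_E21 _
        | exact g.memN_E31 _ | exact g.memN_E32 _
    obtain ⟨A, B, h⟩ := mem
    refine ⟨A, B, ?_⟩
    rw [sub_zero, show (adU g.E10)^[3] ((adU g.F31)^[3] g.cU)
      = adU g.E10 (adU g.E10 (adU g.E10 (adU g.F31 (adU g.F31 (adU g.F31 g.cU))))) from rfl,
      g.key3, h]
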